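/- Let (A, τ) be a unital commutative ℝ-algebra endowed with a locally multiplicatively convex topology τ, d ∈ ℕ, and M a 2d-power module of A. Then the closure of M with respect to τ equals Pos(X_M ∩ sp(τ)), i.e. cl_τ(M) = {a ∈ A : â ≥ 0 on X_M ∩ sp(τ)}. -/

import Mathlib

/-- The character space `X(A)` topologized by the weakest topology making all Gelfand
transforms continuous. -/
noncomputable instance charSpaceTopology (A : Type*) [CommRing A] [Algebra ℝ A] :
    TopologicalSpace (A →ₐ[ℝ] ℝ) :=
  TopologicalSpace.induced (fun (α : A →ₐ[ℝ] ℝ) (a : A) => α a) Pi.topologicalSpace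

/-- The locally convex topology on `A` generated by a family of seminorms. -/
noncomputable def seminormFamilyTopology {A : Type*} [CommRing A] [Algebra ℝ A]
    {ι : Type*} [Nonempty ι] (p : ι → Seminorm ℝ A) : TopologicalSpace A :=
  (SeminormFamily.moduleFilterBasis (p : SeminormFamily ℝ A ι)).topology

/-- A `2d`-power module of `A`. -/
def IsPowerModule {A : Type*} [CommRing A] [Algebra ℝ A] (d : ℕ) (M : Set A) : Prop :=
  (1 : A) ∈ M ∧ (∀ x ∈ M, ∀ y ∈ M, x + y ∈ M) ∧ ∀ a : A, ∀ x ∈ M, a ^ (2 * d) * x ∈ M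


namespace ClosurePM
open PowerSeries

/-- Coefficients of the binomial series `(1-X)^α`. -/
noncomputable def bc (α : ℝ) : ℕ → ℝ
  | 0 => 1
  | (k+1) => bc α k * ((k : ℝ) - α) / ((k : ℝ) + 1)

lemma bc_zero (α : ℝ) : bc α 0 = 1 := rfl

lemma bc_succ (α : ℝ) (k : ℕ) : bc α (k+1) = bc α k * ((k : ℝ) - α) / ((k : ℝ) + 1) := rfl

lemma bc_abs_le_one {α : ℝ} (h0 : 0 ≤ α) (h1 : α ≤ 1) : ∀ k, |bc α k| ≤ 1 := by
  intro k
  induction k with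
  | zero => simp [bc_zero]
  | succ k ih =>
    rw [bc_succ, abs_div, abs_mul]
    have hk1 : (0:ℝ) < (k:ℝ) + 1 := by positivity
    rw [abs_of_pos hk1, div_le_one hk1]
    have h2 : |(k:ℝ) - α| ≤ (k:ℝ) + 1 := by
      rw [abs_le]
      constructor <;> nlinarith [Nat.cast_nonneg (α := ℝ) k]
    calc |bc α k| * |(k:ℝ) - α| ≤ 1 * ((k:ℝ) + 1) := by
          apply mul_le_mul ih h2 (abs_nonneg _) zero_le_one
      _ = (k:ℝ) + 1 := one_mul _

/-- The formal binomial series `(1-X)^α`. -/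
noncomputable def bser (α : ℝ) : PowerSeries ℝ := PowerSeries.mk (bc α)

lemma coeff_bser (α : ℝ) (n : ℕ) : (coeff n) (bser α) = bc α n := coeff_mk n _

lemma bser_ode (α : ℝ) :
    (1 - X) * (d⁄dX ℝ (bser α)) = C (-α) * bser α := by
  ext n
  rw [sub_mul, one_mul, map_sub, coeff_C_mul, coeff_derivative, coeff_bser, coeff_bser]
  cases n with
  | zero =>
    rw [coeff_zero_X_mul, bc_succ]
    push_cast
    ring
  | succ m =>
    rw [coeff_succ_X_mul, coeff_derivative, coeff_bser]
    have h1 : (0:ℝ) < (m:ℝ) + 1 + 1 := by positivity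
    rw [bc_succ α (m+1)]
    push_cast
    field_simp
    ring

lemma bser_pow_ode (α : ℝ) (m : ℕ) (hm : 1 ≤ m) (hα : (m : ℝ) * α = 1) :
    (1 - X) * (d⁄dX ℝ ((bser α) ^ m)) = - ((bser α) ^ m) := by
  have hleib : (d⁄dX ℝ) ((bser α) ^ m) = m • ((bser α) ^ (m-1) • (d⁄dX ℝ) (bser α)) :=
    Derivation.leibniz_pow _ _ m
  rw [hleib, smul_eq_mul, mul_smul_comm]
  have : (1 - X) * ((bser α) ^ (m-1) * (d⁄dX ℝ) (bser α))
      = (bser α) ^ (m-1) * ((1 - X) * (d⁄dX ℝ) (bser α)) := by ring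
  rw [this, bser_ode]
  have hpow : (bser α) ^ (m-1) * (C (-α) * bser α) = C (-α) * (bser α) ^ m := by
    rw [← mul_assoc, mul_comm ((bser α) ^ (m-1)) (C (-α)), mul_assoc]
    congr 1
    rw [← pow_succ]
    congr 1
    omega
  rw [hpow, nsmul_eq_mul]
  have : (m : ℝ⟦X⟧) * (C (-α) * (bser α) ^ m) = C ((m:ℝ) * (-α)) * (bser α) ^ m := by
    rw [← mul_assoc]
    congr 1
    rw [← map_natCast (C) m, ← map_mul]
  rw [this]
  have : (m:ℝ) * (-α) = -1 := by rw [mul_neg, hα]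
  rw [this, map_neg, map_one, neg_mul, one_mul]

/-- The key formal identity: the binomial series for `(1-X)^(1/m)` raised to the `m`. -/
theorem bser_pow_eq (m : ℕ) (hm : 1 ≤ m) :
    (bser (1/(m:ℝ))) ^ m = 1 - X := by
  have hmR : (m:ℝ) ≠ 0 := by positivity
  set α : ℝ := 1/(m:ℝ) with hαdef
  have hα : (m:ℝ) * α = 1 := by
    rw [hαdef, mul_one_div, div_self hmR]
  have hode := bser_pow_ode α m hm hα
  set G : ℝ⟦X⟧ := (bser α) ^ m with hG
  -- coefficient zero
  have hg0 : (coeff 0) G = 1 := by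
    have hb : constantCoeff (bser α) = 1 := by
      have := coeff_bser α 0
      rw [coeff_zero_eq_constantCoeff] at this
      rw [this, bc_zero]
    rw [hG, coeff_zero_eq_constantCoeff, map_pow, hb, one_pow]
  -- coefficient recurrence from the ODE
  have hrec : ∀ n : ℕ, (coeff n) ((1 - X) * (d⁄dX ℝ G)) = - (coeff n) G := by
    intro n; rw [hode, map_neg]
  have hg1 : (coeff 1) G = -1 := by
    have := hrec 0
    rw [sub_mul, one_mul, map_sub, coeff_zero_X_mul, coeff_derivative, hg0] at this
    simpa using this
  have hgn : ∀ n : ℕ, 2 ≤ n → (coeff n) G = 0 := by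
    intro n hn
    induction n with
    | zero => omega
    | succ k ih =>
      have hstep := hrec k
      rw [sub_mul, one_mul, map_sub] at hstep
      rcases Nat.lt_or_ge k 2 with hk | hk
      · -- k = 1, so n = 2 : (coeff 1 DG) - (coeff 0 DG) relation gives g2 = 0
        interval_cases k
        · omega
        · -- k = 1
          rw [coeff_succ_X_mul, coeff_derivative, coeff_derivative, hg1] at hstep
          push_cast at hstep
          linarith
      · have hk1 : (coeff k) G = 0 := ih hk
        have hk' : 1 ≤ k := by omega
        obtain ⟨j, rfl⟩ : ∃ j, k = j + 1 := ⟨k - 1, by omega⟩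
        rw [coeff_succ_X_mul, coeff_derivative, coeff_derivative, hk1] at hstep
        push_cast at hstep
        have h3 : ((j:ℝ) + 1 + 1) ≠ 0 := by positivity
        have hz : (coeff (j+1+1)) G * ((j:ℝ)+1+1) = 0 := by linarith
        rcases mul_eq_zero.mp hz with h | h
        · exact h
        · exact absurd h h3
  ext n
  rcases Nat.lt_or_ge n 2 with hn | hn
  · interval_cases n
    · rw [hg0, map_sub, coeff_zero_eq_constantCoeff, map_one]
      simp
    · rw [hg1, map_sub]
      simp
  · rw [hgn n hn, map_sub]
    have h1 : (coeff n) (1 : ℝ⟦X⟧) = 0 := by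
      rw [coeff_one]
      simp; omega
    have h2 : (coeff n) (X : ℝ⟦X⟧) = 0 := by
      rw [coeff_X]
      simp; omega
    rw [h1, h2]; ring

end ClosurePM

namespace ClosurePM
open PowerSeries Polynomial Finset

variable {A : Type*} [CommRing A] [Algebra ℝ A]

/-- Submultiplicativity of a seminorm. -/
def Submult (q : Seminorm ℝ A) : Prop := ∀ a b : A, q (a * b) ≤ q a * q b

lemma seminorm_sum_le {β : Type*} (q : Seminorm ℝ A) (s : Finset β) (f : β → A) :
    q (∑ i ∈ s, f i) ≤ ∑ i ∈ s, q (f i) := by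
  classical
  induction s using Finset.induction with
  | empty => simp
  | insert a s h ih =>
    rw [Finset.sum_insert h, Finset.sum_insert h]
    exact (map_add_le_add q _ _).trans (by linarith)

lemma q_pow_le {q : Seminorm ℝ A} (hq : Submult q) (u : A) :
    ∀ j, 1 ≤ j → q (u ^ j) ≤ q u ^ j := by
  intro j hj
  induction j with
  | zero => omega
  | succ k ih =>
    rcases Nat.eq_or_lt_of_le hj with h | h
    · simp [← h]
    · have hk : 1 ≤ k := by omega
      rw [pow_succ, pow_succ]
      exact (hq _ _).trans (mul_le_mul_of_nonneg_right (ih hk) (apply_nonneg q u))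

lemma coeff_abs_le_mul {P P' Q Q' : ℝ[X]} (hP : ∀ k, |P.coeff k| ≤ P'.coeff k)
    (hQ : ∀ k, |Q.coeff k| ≤ Q'.coeff k) : ∀ k, |(P * Q).coeff k| ≤ (P' * Q').coeff k := by
  intro k
  rw [Polynomial.coeff_mul, Polynomial.coeff_mul]
  refine (Finset.abs_sum_le_sum_abs _ _).trans (Finset.sum_le_sum ?_)
  intro x _
  rw [abs_mul]
  exact mul_le_mul (hP _) (hQ _) (abs_nonneg _) ((abs_nonneg _).trans (hP _))

lemma coeff_abs_le_pow {P P' : ℝ[X]} (hP : ∀ k, |P.coeff k| ≤ P'.coeff k) (m : ℕ) :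
    ∀ k, |(P ^ m).coeff k| ≤ (P' ^ m).coeff k := by
  induction m with
  | zero =>
    intro k
    simp only [pow_zero, Polynomial.coeff_one]
    split_ifs <;> simp
  | succ m ih =>
    intro k
    rw [pow_succ, pow_succ]
    exact coeff_abs_le_mul ih hP k

lemma coeff_mul_eq_of_agree {f g f' g' : ℝ⟦X⟧} {N : ℕ}
    (hf : ∀ j ≤ N, PowerSeries.coeff j f = PowerSeries.coeff j f')
    (hg : ∀ j ≤ N, PowerSeries.coeff j g = PowerSeries.coeff j g') :
    ∀ j ≤ N, PowerSeries.coeff j (f * g) = PowerSeries.coeff j (f' * g') := by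
  intro j hj
  rw [PowerSeries.coeff_mul, PowerSeries.coeff_mul]
  apply Finset.sum_congr rfl
  intro x hx
  rw [Finset.HasAntidiagonal.mem_antidiagonal] at hx
  rw [hf x.1 (by omega), hg x.2 (by omega)]

lemma coeff_pow_eq_of_agree {f f' : ℝ⟦X⟧} {N : ℕ}
    (hf : ∀ j ≤ N, PowerSeries.coeff j f = PowerSeries.coeff j f') (m : ℕ) :
    ∀ j ≤ N, PowerSeries.coeff j (f ^ m) = PowerSeries.coeff j (f' ^ m) := by
  induction m with
  | zero => intro j _; rw [pow_zero, pow_zero]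
  | succ m ih =>
    intro j hj
    rw [pow_succ, pow_succ]
    exact coeff_mul_eq_of_agree ih hf j hj

/-- The geometric polynomial `1 + X + ... + X^N`. -/
noncomputable def geo (N : ℕ) : ℝ[X] := ∑ k ∈ Finset.range (N + 1), Polynomial.X ^ k

lemma geo_coeff (N j : ℕ) : (geo N).coeff j = if j ≤ N then 1 else 0 := by
  rw [geo, Polynomial.finset_sum_coeff]
  simp_rw [Polynomial.coeff_X_pow]
  rw [Finset.sum_ite_eq]
  simp [Nat.lt_succ_iff]

lemma geo_natDegree (N : ℕ) : (geo N).natDegree ≤ N := by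
  rw [Polynomial.natDegree_le_iff_coeff_eq_zero]
  intro j hj
  rw [geo_coeff]
  simp only [if_neg (by omega : ¬ j ≤ N)]

lemma geo_eval_le {N : ℕ} {ρ : ℝ} (h0 : 0 ≤ ρ) (h1 : ρ < 1) :
    (geo N).eval ρ ≤ 1 / (1 - ρ) := by
  have hev : (geo N).eval ρ = ∑ k ∈ Finset.range (N + 1), ρ ^ k := by
    rw [geo, Polynomial.eval_finset_sum]
    simp
  rw [hev]
  have hmul := geom_sum_mul ρ (N + 1)
  have h1ρ : 0 < 1 - ρ := by linarith
  have hpow : 0 ≤ ρ ^ (N + 1) := by positivity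
  rw [le_div_iff₀ h1ρ] at *
  nlinarith [hmul]

/-- Key analytic lemma: `1 - u` is approximable by `m`-th powers when `q u < 1`. -/
theorem approx_pow (q : Seminorm ℝ A) (hq : Submult q) (m : ℕ) (hm : 1 ≤ m)
    {u : A} (hu : q u < 1) {ε : ℝ} (hε : 0 < ε) :
    ∃ g : A, q (g ^ m - (1 - u)) < ε := by
  classical
  set r : ℝ := q u with hr
  have hr0 : 0 ≤ r := apply_nonneg q u
  set ρ : ℝ := (1 + r) / 2 with hρ
  have hρ0 : 0 < ρ := by rw [hρ]; linarith
  have hρ1 : ρ < 1 := by rw [hρ]; linarith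
  have hrρ : r < ρ := by rw [hρ]; linarith
  have hρne : ρ ≠ 0 := ne_of_gt hρ0
  set K : ℝ := (1 / (1 - ρ)) ^ m with hK
  have hK0 : 0 < K := by
    apply pow_pos; rw [one_div]; exact inv_pos.mpr (by linarith)
  have hq1 : 0 ≤ r / ρ := div_nonneg hr0 hρ0.le
  have hq2 : r / ρ < 1 := (div_lt_one hρ0).mpr hrρ
  obtain ⟨N₀, hN₀⟩ := exists_pow_lt_of_lt_one (div_pos hε hK0) hq2
  set N : ℕ := max N₀ 1 with hN
  have hN1 : 1 ≤ N := le_max_right _ _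
  have hNb : (r / ρ) ^ (N + 1) < ε / K := by
    calc (r / ρ) ^ (N + 1) ≤ (r / ρ) ^ N₀ :=
          pow_le_pow_of_le_one hq1 hq2.le (by omega)
      _ < ε / K := hN₀
  -- the truncated binomial series
  set α : ℝ := 1 / (m : ℝ) with hα
  have hα0 : 0 ≤ α := by positivity
  have hα1 : α ≤ 1 := by
    rw [hα]
    rcases Nat.eq_or_lt_of_le hm with h | h
    · rw [← h]; norm_num
    · apply div_le_one_of_le₀ _ (by positivity)
      exact_mod_cast hm
  set F : ℝ⟦X⟧ := bser α with hF
  set T : ℝ[X] := PowerSeries.trunc (N + 1) F with hT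
  set Q : ℝ[X] := T ^ m with hQdef
  set g : A := Polynomial.aeval u T with hg
  refine ⟨g, ?_⟩
  -- degrees
  have hdegT : T.natDegree ≤ N := Nat.lt_succ_iff.mp (natDegree_trunc_lt F N)
  set n₀ : ℕ := m * N + N + 2 with hn₀
  have hdegQ : Q.natDegree < n₀ := by
    apply lt_of_le_of_lt Polynomial.natDegree_pow_le
    calc m * T.natDegree ≤ m * N := Nat.mul_le_mul_left m hdegT
      _ < n₀ := by omega
  have hdegG : ((geo N) ^ m).natDegree < n₀ := by
    apply lt_of_le_of_lt Polynomial.natDegree_pow_le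
    calc m * (geo N).natDegree ≤ m * N := Nat.mul_le_mul_left m (geo_natDegree N)
      _ < n₀ := by omega
  -- the coefficients of Q agree with 1 - X up to degree N
  have hTF : ∀ j ≤ N, PowerSeries.coeff j (T : ℝ⟦X⟧) = PowerSeries.coeff j F := by
    intro j hj
    rw [Polynomial.coeff_coe, hT, PowerSeries.coeff_trunc, if_pos (by omega)]
  have hQcoeff : ∀ j ≤ N, Q.coeff j = PowerSeries.coeff j (1 - PowerSeries.X : ℝ⟦X⟧) := by
    intro j hj
    have h1 : Q.coeff j = PowerSeries.coeff j ((T : ℝ⟦X⟧) ^ m) := by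
      rw [← Polynomial.coe_pow, Polynomial.coeff_coe]
    rw [h1, coeff_pow_eq_of_agree hTF m j hj, hF, hα, bser_pow_eq m hm]
  have hcoeff1X : ∀ j : ℕ, PowerSeries.coeff j (1 - PowerSeries.X : ℝ⟦X⟧)
      = if j = 0 then 1 else if j = 1 then -1 else 0 := by
    intro j
    rw [map_sub, PowerSeries.coeff_one, PowerSeries.coeff_X]
    rcases Nat.eq_zero_or_pos j with h | h
    · subst h; norm_num
    · have hj0 : j ≠ 0 := by omega
      by_cases h1 : j = 1
      · subst h1; norm_num
      · simp [hj0, h1]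
  -- sum expansion
  have hgpow : g ^ m = Polynomial.aeval u Q := by rw [hQdef, map_pow]
  have hexp : Polynomial.aeval u Q = ∑ j ∈ Finset.range n₀, Q.coeff j • u ^ j :=
    Polynomial.aeval_eq_sum_range' hdegQ u
  have hsplit : ∑ j ∈ Finset.range n₀, Q.coeff j • u ^ j
      = (∑ j ∈ Finset.range (N + 1), Q.coeff j • u ^ j)
        + ∑ j ∈ Finset.Ico (N + 1) n₀, Q.coeff j • u ^ j := by
    rw [Finset.range_eq_Ico, ← Finset.sum_Ico_consecutive _ (Nat.zero_le (N + 1)) (by omega)]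
    rw [Finset.range_eq_Ico]
  have hfirst : (∑ j ∈ Finset.range (N + 1), Q.coeff j • u ^ j) = 1 - u := by
    have hsub : ({0, 1} : Finset ℕ) ⊆ Finset.range (N + 1) := by
      intro x hx
      simp only [Finset.mem_insert, Finset.mem_singleton] at hx
      rcases hx with h | h <;> subst h <;> (rw [Finset.mem_range]; omega)
    rw [← Finset.sum_subset hsub]
    · rw [Finset.sum_pair (by norm_num : (0:ℕ) ≠ 1)]
      rw [hQcoeff 0 (by omega), hQcoeff 1 hN1, hcoeff1X, hcoeff1X]
      norm_num
      ring
    · intro x hx hx2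
      rw [Finset.mem_range] at hx
      simp only [Finset.mem_insert, Finset.mem_singleton] at hx2
      push_neg at hx2
      rw [hQcoeff x (by omega), hcoeff1X, if_neg hx2.1, if_neg hx2.2, zero_smul]
  have herr : g ^ m - (1 - u) = ∑ j ∈ Finset.Ico (N + 1) n₀, Q.coeff j • u ^ j := by
    rw [hgpow, hexp, hsplit, hfirst]; ring
  rw [herr]
  -- estimate
  have hdom : ∀ k, |T.coeff k| ≤ (geo N).coeff k := by
    intro k
    rw [hT, PowerSeries.coeff_trunc, geo_coeff]
    split_ifs with h1 h2
    · rw [hF, coeff_bser]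
      exact bc_abs_le_one hα0 hα1 k
    · omega
    · norm_num
    · norm_num
  have hdomQ : ∀ k, |Q.coeff k| ≤ ((geo N) ^ m).coeff k := coeff_abs_le_pow hdom m
  calc q (∑ j ∈ Finset.Ico (N + 1) n₀, Q.coeff j • u ^ j)
      ≤ ∑ j ∈ Finset.Ico (N + 1) n₀, q (Q.coeff j • u ^ j) := seminorm_sum_le q _ _
    _ ≤ ∑ j ∈ Finset.Ico (N + 1) n₀, ((geo N) ^ m).coeff j * (ρ ^ j * (r / ρ) ^ (N + 1)) := by
        apply Finset.sum_le_sum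
        intro j hj
        rw [Finset.mem_Ico] at hj
        have hj1 : 1 ≤ j := by omega
        have h1 : q (Q.coeff j • u ^ j) = |Q.coeff j| * q (u ^ j) := by
          rw [map_smul_eq_mul, Real.norm_eq_abs]
        rw [h1]
        have h2 : q (u ^ j) ≤ r ^ j := q_pow_le hq u j hj1
        have h3 : r ^ j ≤ ρ ^ j * (r / ρ) ^ (N + 1) := by
          have h4 : r ^ j = ρ ^ j * (r / ρ) ^ j := by
            rw [← mul_pow, mul_div_cancel₀ _ hρne]
          rw [h4]
          apply mul_le_mul_of_nonneg_left _ (by positivity)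
          exact pow_le_pow_of_le_one hq1 hq2.le (by omega)
        calc |Q.coeff j| * q (u ^ j) ≤ |Q.coeff j| * r ^ j :=
              mul_le_mul_of_nonneg_left h2 (abs_nonneg _)
          _ ≤ ((geo N) ^ m).coeff j * r ^ j :=
              mul_le_mul_of_nonneg_right (hdomQ j) (by positivity)
          _ ≤ ((geo N) ^ m).coeff j * (ρ ^ j * (r / ρ) ^ (N + 1)) :=
              mul_le_mul_of_nonneg_left h3 ((abs_nonneg _).trans (hdomQ j))
    _ = (r / ρ) ^ (N + 1) * ∑ j ∈ Finset.Ico (N + 1) n₀, ((geo N) ^ m).coeff j * ρ ^ j := by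
        rw [Finset.mul_sum]
        apply Finset.sum_congr rfl
        intro j _; ring
    _ ≤ (r / ρ) ^ (N + 1) * ∑ j ∈ Finset.range n₀, ((geo N) ^ m).coeff j * ρ ^ j := by
        apply mul_le_mul_of_nonneg_left _ (by positivity)
        apply Finset.sum_le_sum_of_subset_of_nonneg
        · intro x hx
          rw [Finset.mem_Ico] at hx
          rw [Finset.mem_range]
          omega
        · intro j _ _
          have := (abs_nonneg (Q.coeff j)).trans (hdomQ j)
          positivity
    _ = (r / ρ) ^ (N + 1) * ((geo N) ^ m).eval ρ := by
        rw [Polynomial.eval_eq_sum_range' hdegG]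
    _ = (r / ρ) ^ (N + 1) * ((geo N).eval ρ) ^ m := by rw [Polynomial.eval_pow]
    _ ≤ (r / ρ) ^ (N + 1) * K := by
        apply mul_le_mul_of_nonneg_left _ (by positivity)
        rw [hK]
        apply pow_le_pow_left₀ _ (geo_eval_le hρ0.le hρ1) m
        have : (geo N).eval ρ = ∑ k ∈ Finset.range (N + 1), ρ ^ k := by
          rw [geo, Polynomial.eval_finset_sum]; simp
        rw [this]
        positivity
    _ < (ε / K) * K := by
        apply mul_lt_mul_of_pos_right hNb hK0
    _ = ε := div_mul_cancel₀ ε (ne_of_gt hK0)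

end ClosurePM

namespace ClosurePM
variable {A : Type*} [CommRing A] [Algebra ℝ A]

def IsPowerModule' {A : Type*} [CommRing A] [Algebra ℝ A] (d : ℕ) (M : Set A) : Prop :=
  (1 : A) ∈ M ∧ (∀ x ∈ M, ∀ y ∈ M, x + y ∈ M) ∧ ∀ a : A, ∀ x ∈ M, a ^ (2 * d) * x ∈ M

theorem arc (q : Seminorm ℝ A) (hq : Submult q) {d : ℕ} (hd : 0 < d) {M : Set A}
    (hM : IsPowerModule' d M) (L : A →ₗ[ℝ] ℝ) {C : ℝ} (hC : ∀ x, |L x| ≤ C * q x)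
    (hLM : ∀ x ∈ M, 0 ≤ L x) {u : A} (hu : q u < 1) {w : A} (hw : w ∈ M) :
    0 ≤ L ((1 - u) * w) := by
  have key : ∀ ε : ℝ, 0 < ε → 0 ≤ L ((1 - u) * w) + ε := by
    intro ε hε
    set δ : ℝ := ε / ((|C| + 1) * (q w + 1)) with hδ
    have hδpos : 0 < δ := by positivity
    obtain ⟨g, hg⟩ := approx_pow q hq (2 * d) (by omega) hu hδpos
    have hmem : g ^ (2 * d) * w ∈ M := hM.2.2 g w hw
    have h1 : 0 ≤ L (g ^ (2 * d) * w) := hLM _ hmem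
    have h2 : L (g ^ (2 * d) * w) - L ((1 - u) * w) = L ((g ^ (2 * d) - (1 - u)) * w) := by
      rw [← map_sub]
      congr 1
      ring
    have h3 : |L ((g ^ (2 * d) - (1 - u)) * w)| ≤ C * q ((g ^ (2 * d) - (1 - u)) * w) := hC _
    have h4 : q ((g ^ (2 * d) - (1 - u)) * w) ≤ q (g ^ (2 * d) - (1 - u)) * q w := hq _ _
    have hC1 : C ≤ |C| + 1 := by cases abs_cases C <;> linarith
    have h5 : C * q ((g ^ (2 * d) - (1 - u)) * w) ≤ (|C| + 1) * (q (g ^ (2 * d) - (1 - u)) * q w) :=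
      calc C * q ((g ^ (2 * d) - (1 - u)) * w)
          ≤ (|C| + 1) * q ((g ^ (2 * d) - (1 - u)) * w) :=
            mul_le_mul_of_nonneg_right hC1 (apply_nonneg _ _)
        _ ≤ (|C| + 1) * (q (g ^ (2 * d) - (1 - u)) * q w) :=
            mul_le_mul_of_nonneg_left h4 (by positivity)
    have h6 : (|C| + 1) * (q (g ^ (2 * d) - (1 - u)) * q w) ≤ (|C| + 1) * (δ * (q w + 1)) := by
      apply mul_le_mul_of_nonneg_left _ (by positivity)
      apply mul_le_mul hg.le (by linarith) (apply_nonneg _ _) hδpos.le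
    have h7 : (|C| + 1) * (δ * (q w + 1)) = ε := by
      rw [hδ]
      field_simp
    have habs := abs_le.mp h3
    linarith
  exact le_of_forall_pos_le_add (by intro ε hε; linarith [key ε hε])

theorem boot (q : Seminorm ℝ A) (hq : Submult q) {d : ℕ} (hd : 0 < d) {M : Set A}
    (hM : IsPowerModule' d M) (L : A →ₗ[ℝ] ℝ) {C : ℝ} (hC : ∀ x, |L x| ≤ C * q x)
    (hLM : ∀ x ∈ M, 0 ≤ L x) : ∀ x, |L x| ≤ L 1 * q x := by
  have h1 : 0 ≤ L 1 := hLM 1 hM.1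
  have key : ∀ u : A, q u < 1 → |L u| ≤ L 1 := by
    intro u hu
    have hplus := arc q hq hd hM L hC hLM hu hM.1
    have hminus : 0 ≤ L ((1 - -u) * 1) := by
      apply arc q hq hd hM L hC hLM _ hM.1
      rwa [show q (-u) = q u from by simpa using map_neg_eq q u]
    rw [mul_one, map_sub] at hplus
    rw [mul_one, map_sub, map_neg] at hminus
    rw [abs_le]
    constructor <;> linarith
  intro x
  have hall : ∀ ε : ℝ, 0 < ε → |L x| ≤ L 1 * (q x + ε) := by
    intro ε hε
    have hpos : 0 < q x + ε := by positivity
    set u : A := (q x + ε)⁻¹ • x with hu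
    have hqu : q u < 1 := by
      rw [hu, map_smul_eq_mul, Real.norm_eq_abs, abs_of_pos (by positivity)]
      rw [inv_mul_lt_iff₀ hpos, mul_one]
      linarith
    have := key u hqu
    rw [hu, map_smul, smul_eq_mul, abs_mul, abs_of_pos (by positivity : (0:ℝ) < (q x + ε)⁻¹)] at this
    calc |L x| = (q x + ε) * ((q x + ε)⁻¹ * |L x|) := by field_simp
      _ ≤ (q x + ε) * L 1 := mul_le_mul_of_nonneg_left this hpos.le
      _ = L 1 * (q x + ε) := by ring
  apply le_of_forall_pos_le_add
  intro ε hε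
  have := hall (ε / (L 1 + 1)) (by positivity)
  have h2 : L 1 * (ε / (L 1 + 1)) ≤ ε := by
    rw [mul_div_assoc']
    rw [div_le_iff₀ (by positivity)]
    nlinarith
  nlinarith

end ClosurePM

namespace ClosurePM
variable {A : Type*} [CommRing A] [Algebra ℝ A]

/-- The state space of `(A, q, M)` inside the product space `A → ℝ`. -/
def States (q : Seminorm ℝ A) (M : Set A) : Set (A → ℝ) :=
  {φ | IsLinearMap ℝ φ ∧ (∀ m ∈ M, 0 ≤ φ m) ∧ (∀ x, |φ x| ≤ q x) ∧ φ 1 = 1}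

lemma states_convex (q : Seminorm ℝ A) (M : Set A) : Convex ℝ (States q M) := by
  rintro φ ⟨hφl, hφp, hφb, hφ1⟩ ψ ⟨hψl, hψp, hψb, hψ1⟩ a b ha hb hab
  refine ⟨?_, ?_, ?_, ?_⟩
  · constructor
    · intro x y
      simp only [Pi.add_apply, Pi.smul_apply, smul_eq_mul, hφl.map_add, hψl.map_add]
      ring
    · intro c x
      simp only [Pi.add_apply, Pi.smul_apply, smul_eq_mul, hφl.map_smul, hψl.map_smul]
      ring
  · intro m hm
    have := hφp m hm; have := hψp m hm
    simp only [Pi.add_apply, Pi.smul_apply, smul_eq_mul]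
    nlinarith
  · intro x
    simp only [Pi.add_apply, Pi.smul_apply, smul_eq_mul]
    calc |a * φ x + b * ψ x| ≤ |a * φ x| + |b * ψ x| := abs_add_le _ _
      _ = a * |φ x| + b * |ψ x| := by rw [abs_mul, abs_mul, abs_of_nonneg ha, abs_of_nonneg hb]
      _ ≤ a * q x + b * q x := by
          have := hφb x; have := hψb x
          have := apply_nonneg q x
          nlinarith
      _ = q x := by rw [← add_mul, hab, one_mul]
  · simp only [Pi.add_apply, Pi.smul_apply, smul_eq_mul, hφ1, hψ1]
    linarith

lemma states_isClosed (q : Seminorm ℝ A) (M : Set A) : IsClosed (States q M) := by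
  have h1 : States q M =
      ({φ : A → ℝ | ∀ x y : A, φ (x + y) = φ x + φ y} ∩
        {φ : A → ℝ | ∀ (c : ℝ) (x : A), φ (c • x) = c * φ x}) ∩
      (({φ : A → ℝ | ∀ m ∈ M, 0 ≤ φ m} ∩ {φ : A → ℝ | ∀ x, |φ x| ≤ q x}) ∩
        {φ : A → ℝ | φ 1 = 1}) := by
    ext φ
    constructor
    · rintro ⟨hl, hp, hb, h1⟩
      exact ⟨⟨fun x y => hl.map_add x y, fun c x => hl.map_smul c x⟩, ⟨⟨hp, hb⟩, h1⟩⟩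
    · rintro ⟨⟨hadd, hsmul⟩, ⟨⟨hp, hb⟩, h1⟩⟩
      exact ⟨⟨hadd, hsmul⟩, hp, hb, h1⟩
  rw [h1]
  simp_rw [Set.setOf_forall]
  apply IsClosed.inter
  · apply IsClosed.inter
    · apply isClosed_iInter; intro x
      apply isClosed_iInter; intro y
      exact isClosed_eq (continuous_apply _) ((continuous_apply x).add (continuous_apply y))
    · apply isClosed_iInter; intro c
      apply isClosed_iInter; intro x
      exact isClosed_eq (continuous_apply _) ((continuous_apply x).const_smul c)
  · apply IsClosed.inter
    · apply IsClosed.inter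
      · apply isClosed_iInter; intro m
        apply isClosed_iInter; intro _
        exact isClosed_le continuous_const (continuous_apply m)
      · apply isClosed_iInter; intro x
        exact isClosed_le ((continuous_apply x).abs) continuous_const
    · exact isClosed_eq (continuous_apply 1) continuous_const

lemma states_isCompact (q : Seminorm ℝ A) (M : Set A) : IsCompact (States q M) := by
  have hsub : States q M ⊆ Set.pi Set.univ (fun x => Set.Icc (-(q x)) (q x)) := by
    rintro φ ⟨_, _, hb, _⟩ x _
    exact abs_le.mp (hb x)
  exact IsCompact.of_isClosed_subset (isCompact_univ_pi fun x => isCompact_Icc)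
    (states_isClosed q M) hsub

/-- Linearity helper: the set-membership conditions on states via `iInter`. -/
lemma states_mem_iff {q : Seminorm ℝ A} {M : Set A} {φ : A → ℝ} :
    φ ∈ States q M ↔ IsLinearMap ℝ φ ∧ (∀ m ∈ M, 0 ≤ φ m) ∧ (∀ x, |φ x| ≤ q x) ∧ φ 1 = 1 :=
  Iff.rfl

end ClosurePM

namespace ClosurePM
variable {A : Type*} [CommRing A] [Algebra ℝ A]

theorem extreme_mul (q : Seminorm ℝ A) (hq : Submult q) {d : ℕ} (hd : 0 < d) {M : Set A}
    (hM : IsPowerModule' d M) {φ : A → ℝ}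
    (hφ : φ ∈ (States q M).extremePoints ℝ) :
    ∀ x y : A, φ (x * y) = φ x * φ y := by
  obtain ⟨hφS, hext⟩ := hφ
  obtain ⟨hlin, hpos, hbd, hone⟩ := hφS
  set Lφ : A →ₗ[ℝ] ℝ := IsLinearMap.mk' φ hlin with hLφdef
  have hLφ : ∀ x, Lφ x = φ x := fun _ => rfl
  have hbd' : ∀ x, |Lφ x| ≤ 1 * q x := by intro x; rw [one_mul, hLφ]; exact hbd x
  -- Step 1: the multiplicative identity for small powers
  have step1 : ∀ c : A, q c < 1 → ∀ x : A, φ (c ^ (2*d) * x) = φ (c ^ (2*d)) * φ x := by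
    intro c hc
    have hqc : q (c ^ (2*d)) < 1 := by
      apply lt_of_le_of_lt (q_pow_le hq c (2*d) (by omega))
      exact pow_lt_one₀ (apply_nonneg q c) hc (by omega)
    have hcM : c ^ (2*d) ∈ M := by
      have := hM.2.2 c 1 hM.1
      rwa [mul_one] at this
    set lam : ℝ := φ (c ^ (2*d)) with hlam
    have hlam0 : 0 ≤ lam := hpos _ hcM
    have hlam1 : lam < 1 := lt_of_le_of_lt (le_trans (le_abs_self _) (hbd _)) hqc
    set L1 : A →ₗ[ℝ] ℝ := Lφ.comp (LinearMap.mulLeft ℝ (c ^ (2*d))) with hL1def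
    have hL1 : ∀ x, L1 x = φ (c ^ (2*d) * x) := fun _ => rfl
    have hL1pos : ∀ m ∈ M, 0 ≤ L1 m := by
      intro m hm
      rw [hL1]
      exact hpos _ (hM.2.2 c m hm)
    have hL1bd : ∀ x, |L1 x| ≤ q (c ^ (2*d)) * q x := by
      intro x
      rw [hL1]
      exact le_trans (hbd _) (hq _ _)
    have hL11 : L1 1 = lam := by rw [hL1, mul_one]
    have hboot1 : ∀ x, |L1 x| ≤ lam * q x := by
      have := boot q hq hd hM L1 hL1bd hL1pos
      rwa [hL11] at this
    set L2 : A →ₗ[ℝ] ℝ := Lφ - L1 with hL2def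
    have hL2 : ∀ x, L2 x = φ x - φ (c ^ (2*d) * x) := fun _ => rfl
    have hL2pos : ∀ m ∈ M, 0 ≤ L2 m := by
      intro m hm
      have := arc q hq hd hM Lφ hbd' hpos hqc hm
      rw [one_sub_mul, map_sub] at this
      rw [hL2]
      exact this
    have hL2bd : ∀ x, |L2 x| ≤ (1 + q (c ^ (2*d))) * q x := by
      intro x
      rw [hL2]
      calc |φ x - φ (c ^ (2*d) * x)| ≤ |φ x| + |φ (c ^ (2*d) * x)| := abs_sub _ _
        _ ≤ q x + q (c ^ (2*d)) * q x := add_le_add (hbd x) (hL1bd x)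
        _ = (1 + q (c ^ (2*d))) * q x := by ring
    have hL21 : L2 1 = 1 - lam := by rw [hL2, mul_one, hone]
    have hboot2 : ∀ x, |L2 x| ≤ (1 - lam) * q x := by
      have := boot q hq hd hM L2 hL2bd hL2pos
      rwa [hL21] at this
    by_cases hz : lam = 0
    · intro x
      rw [hz, zero_mul]
      have := hboot1 x
      rw [hz, zero_mul] at this
      have habs : |L1 x| = 0 := le_antisymm this (abs_nonneg _)
      rw [← hL1 x, abs_eq_zero.mp habs]
    · have hlampos : 0 < lam := lt_of_le_of_ne hlam0 (Ne.symm hz)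
      have h1lam : 0 < 1 - lam := by linarith
      set φ₁ : A → ℝ := fun x => lam⁻¹ * L1 x with hφ₁def
      set φ₂ : A → ℝ := fun x => (1-lam)⁻¹ * L2 x with hφ₂def
      have hφ₁S : φ₁ ∈ States q M := by
        refine ⟨⟨?_, ?_⟩, ?_, ?_, ?_⟩
        · intro x y; simp only [hφ₁def, map_add]; ring
        · intro r x; simp only [hφ₁def, map_smul, smul_eq_mul]; ring
        · intro m hm
          exact mul_nonneg (inv_nonneg.mpr hlam0) (hL1pos m hm)
        · intro x
          rw [hφ₁def]
          simp only []
          rw [abs_mul, abs_of_pos (inv_pos.mpr hlampos)]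
          calc lam⁻¹ * |L1 x| ≤ lam⁻¹ * (lam * q x) :=
                mul_le_mul_of_nonneg_left (hboot1 x) (inv_nonneg.mpr hlam0)
            _ = q x := by field_simp
        · simp only [hφ₁def, hL11]
          field_simp
      have hφ₂S : φ₂ ∈ States q M := by
        refine ⟨⟨?_, ?_⟩, ?_, ?_, ?_⟩
        · intro x y; simp only [hφ₂def, map_add]; ring
        · intro r x; simp only [hφ₂def, map_smul, smul_eq_mul]; ring
        · intro m hm
          exact mul_nonneg (inv_nonneg.mpr h1lam.le) (hL2pos m hm)
        · intro x
          rw [hφ₂def]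
          simp only []
          rw [abs_mul, abs_of_pos (inv_pos.mpr h1lam)]
          calc (1-lam)⁻¹ * |L2 x| ≤ (1-lam)⁻¹ * ((1-lam) * q x) :=
                mul_le_mul_of_nonneg_left (hboot2 x) (inv_nonneg.mpr h1lam.le)
            _ = q x := by field_simp
        · simp only [hφ₂def, hL21]
          field_simp
      have hseg : φ ∈ openSegment ℝ φ₁ φ₂ := by
        refine ⟨lam, 1 - lam, hlampos, h1lam, by ring, ?_⟩
        funext x
        simp only [Pi.add_apply, Pi.smul_apply, smul_eq_mul, hφ₁def, hφ₂def]
        have e1 : lam * (lam⁻¹ * L1 x) = L1 x := by field_simp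
        have e2 : (1-lam) * ((1-lam)⁻¹ * L2 x) = L2 x := by field_simp
        rw [e1, e2, hL1 x, hL2 x]
        ring
      have heq := hext hφ₁S hφ₂S hseg
      intro x
      have := congrFun heq x
      simp only [hφ₁def, hL1] at this
      rw [← this]
      field_simp
  -- Step 2: the identity for all powers by rescaling
  have step2 : ∀ c x : A, φ (c ^ (2*d) * x) = φ (c ^ (2*d)) * φ x := by
    intro c x
    set t : ℝ := (2 * (q c + 1))⁻¹ with ht
    have hqc0 : 0 ≤ q c := apply_nonneg q c
    have ht0 : 0 < t := by rw [ht]; positivity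
    have htc : q (t • c) < 1 := by
      rw [map_smul_eq_mul, Real.norm_eq_abs, abs_of_pos ht0, ht]
      rw [inv_mul_lt_iff₀ (by positivity)]
      nlinarith
    have h := step1 (t • c) htc x
    rw [_root_.smul_pow] at h
    have hLHS : φ ((t ^ (2*d) • c ^ (2*d)) * x) = t ^ (2*d) * φ (c ^ (2*d) * x) := by
      rw [smul_mul_assoc, hlin.map_smul, smul_eq_mul]
    have hRHS : φ (t ^ (2*d) • c ^ (2*d)) = t ^ (2*d) * φ (c ^ (2*d)) := by
      rw [hlin.map_smul, smul_eq_mul]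
    rw [hLHS, hRHS] at h
    have htpow : t ^ (2*d) ≠ 0 := pow_ne_zero _ (ne_of_gt ht0)
    rw [mul_assoc] at h
    exact mul_left_cancel₀ htpow h
  -- Step 3: full multiplicativity by polarization
  have step3 : ∀ x y : A, φ (y * x) = φ y * φ x := by
    intro x y
    set n : ℕ := 2*d with hn
    have hn2 : 2 ≤ n := by omega
    set D : A → ℝ := fun z => φ (z * x) - φ z * φ x with hD
    have hDlin : IsLinearMap ℝ D := by
      constructor
      · intro a b
        simp only [hD, add_mul, hlin.map_add]
        ring
      · intro r a
        simp only [hD, smul_mul_assoc, hlin.map_smul, smul_eq_mul]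
        ring
    set LD : A →ₗ[ℝ] ℝ := IsLinearMap.mk' D hDlin with hLDdef
    have hLD : ∀ z, LD z = D z := fun _ => rfl
    have hDpow : ∀ c : A, D (c ^ n) = 0 := by
      intro c
      simp only [hD]
      rw [step2 c x, sub_self]
    set P : Polynomial ℝ :=
      ∑ j ∈ Finset.range (n+1),
        Polynomial.C ((n.choose j : ℝ) * D (y ^ j)) * Polynomial.X ^ (n - j) with hP
    have heval : ∀ t : ℝ, P.eval t = D ((y + t • 1) ^ n) := by
      intro t
      have hexp : (y + t • (1:A)) ^ n
          = ∑ k ∈ Finset.range (n+1), ((n.choose k : ℝ) * t ^ (n - k)) • y ^ k := by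
        rw [add_pow]
        apply Finset.sum_congr rfl
        intro k _
        rw [_root_.smul_pow, one_pow]
        calc y ^ k * (t ^ (n-k) • (1:A)) * ((n.choose k : ℕ) : A)
            = y ^ k * (t ^ (n-k) • (1:A)) * (((n.choose k : ℕ) : ℝ) • (1:A)) := by
              congr 1
              rw [← map_natCast (algebraMap ℝ A) (n.choose k), Algebra.algebraMap_eq_smul_one]
          _ = ((n.choose k : ℝ) * t ^ (n-k)) • y ^ k := by
              rw [mul_smul_comm, mul_one, mul_smul_comm, mul_one, smul_smul]
      have hDsum : D ((y + t • (1:A)) ^ n)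
          = ∑ k ∈ Finset.range (n+1), ((n.choose k : ℝ) * t ^ (n - k)) * D (y ^ k) := by
        rw [← hLD, hexp, map_sum]
        apply Finset.sum_congr rfl
        intro k _
        rw [map_smul, smul_eq_mul, hLD]
      rw [hDsum, hP, Polynomial.eval_finset_sum]
      apply Finset.sum_congr rfl
      intro j _
      rw [Polynomial.eval_mul, Polynomial.eval_C, Polynomial.eval_pow, Polynomial.eval_X]
      ring
    have hP0 : P = 0 :=
      Polynomial.funext fun t => by rw [heval t, hDpow (y + t • 1), Polynomial.eval_zero]
    have hco : P.coeff (n-1) = (n : ℝ) * D y := by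
      rw [hP, Polynomial.finset_sum_coeff]
      simp_rw [Polynomial.coeff_C_mul, Polynomial.coeff_X_pow]
      rw [Finset.sum_eq_single 1]
      · rw [if_pos rfl, Nat.choose_one_right, pow_one, mul_one]
      · intro b hb hbne
        rw [Finset.mem_range] at hb
        rw [if_neg (by omega), mul_zero]
      · intro h1
        exfalso
        exact h1 (Finset.mem_range.mpr (by omega))
    have hD0 : D y = 0 := by
      have h0 : P.coeff (n-1) = 0 := by rw [hP0, Polynomial.coeff_zero]
      rw [hco] at h0
      have hnne : (n:ℝ) ≠ 0 := by positivity
      rcases mul_eq_zero.mp h0 with h | h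
      · exact absurd h hnne
      · exact h
    simp only [hD] at hD0
    linarith [hD0]
  intro x y
  rw [mul_comm x y, step3 x y, mul_comm]

end ClosurePM

open scoped NNReal

namespace ClosurePM
variable {A : Type*} [CommRing A] [Algebra ℝ A]

lemma pm_smul_mem {d : ℕ} (hd : 0 < d) {M : Set A} (hM : IsPowerModule' d M) {t : ℝ}
    (ht : 0 ≤ t) {x : A} (hx : x ∈ M) : t • x ∈ M := by
  have h2d : ((2*d : ℕ) : ℝ) ≠ 0 := by positivity
  set s : ℝ := t ^ ((1:ℝ) / ((2*d : ℕ) : ℝ)) with hs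
  have hpow : s ^ (2*d : ℕ) = t := by
    rw [hs, ← Real.rpow_natCast (t ^ ((1:ℝ)/((2*d:ℕ):ℝ))) (2*d), ← Real.rpow_mul ht,
      one_div, inv_mul_cancel₀ h2d, Real.rpow_one]
  have hmem := hM.2.2 (s • (1:A)) x hx
  rw [_root_.smul_pow, one_pow, smul_mul_assoc, one_mul, hpow] at hmem
  exact hmem

lemma pm_zero_mem {d : ℕ} (hd : 0 < d) {M : Set A} (hM : IsPowerModule' d M) : (0:A) ∈ M := by
  have := pm_smul_mem hd hM le_rfl hM.1
  rwa [zero_smul] at this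

lemma pm_convex {d : ℕ} (hd : 0 < d) {M : Set A} (hM : IsPowerModule' d M) : Convex ℝ M := by
  intro x hx y hy a b ha hb _
  exact hM.2.1 _ (pm_smul_mem hd hM ha hx) _ (pm_smul_mem hd hM hb hy)

lemma submult_finset_sup {ι : Type*} (p : ι → Seminorm ℝ A)
    (hsub : ∀ i, ∀ a b : A, p i (a*b) ≤ p i a * p i b) (s : Finset ι) :
    Submult (s.sup p) := by
  intro a b
  apply Seminorm.finset_sup_apply_le (mul_nonneg (apply_nonneg _ _) (apply_nonneg _ _))
  intro i hi
  calc p i (a*b) ≤ p i a * p i b := hsub i a b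
    _ ≤ (s.sup p) a * (s.sup p) b :=
        mul_le_mul (Seminorm.le_finset_sup_apply hi) (Seminorm.le_finset_sup_apply hi)
          (apply_nonneg _ _) (apply_nonneg _ _)

lemma submult_smul {q : Seminorm ℝ A} (hq : Submult q) (K : ℝ≥0) (hK : 1 ≤ K) :
    Submult (K • q) := by
  intro a b
  have h1 : (K • q) (a*b) = (K:ℝ) * q (a*b) := rfl
  have h2 : (K • q) a = (K:ℝ) * q a := rfl
  have h3 : (K • q) b = (K:ℝ) * q b := rfl
  rw [h1, h2, h3]
  have hK1 : (1:ℝ) ≤ (K:ℝ) := by exact_mod_cast hK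
  have h0 : 0 ≤ (K:ℝ) * q a * q b := by positivity
  calc (K:ℝ) * q (a*b) ≤ (K:ℝ) * (q a * q b) :=
        mul_le_mul_of_nonneg_left (hq a b) (by linarith)
    _ ≤ ((K:ℝ) * q a) * ((K:ℝ) * q b) := by nlinarith [h0, hK1]

end ClosurePM

open ClosurePM in
theorem closure_powerModule_eq_pos_lmc' (A : Type*) [CommRing A] [Algebra ℝ A]
    {ι : Type*} [Nonempty ι] (p : ι → Seminorm ℝ A)
    (hsub : ∀ i : ι, ∀ a b : A, p i (a * b) ≤ p i a * p i b)
    (d : ℕ) (hd : 0 < d) (M : Set A) (hM : IsPowerModule' d M) :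
    @closure A ((SeminormFamily.moduleFilterBasis (p : SeminormFamily ℝ A ι)).topology) M =
      {a : A | ∀ α : A →ₐ[ℝ] ℝ,
        (∀ m ∈ M, 0 ≤ α m) →
          @Continuous A ℝ ((SeminormFamily.moduleFilterBasis (p : SeminormFamily ℝ A ι)).topology)
            inferInstance ⇑α → 0 ≤ α a} := by
  letI tA : TopologicalSpace A := (SeminormFamily.moduleFilterBasis (p : SeminormFamily ℝ A ι)).topology
  haveI hWS : WithSeminorms p := ⟨rfl⟩
  haveI := hWS.topologicalAddGroup
  haveI := hWS.continuousSMul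
  haveI : ContinuousConstSMul ℝ A := ContinuousSMul.continuousConstSMul
  haveI := hWS.toLocallyConvexSpace
  apply Set.Subset.antisymm
  · -- ⊆ : easy direction
    intro a ha α hαM hαc
    have hclosed : IsClosed {x : A | 0 ≤ α x} := isClosed_le continuous_const hαc
    exact (closure_minimal (fun m hm => hαM m hm) hclosed) ha
  · -- ⊇ : hard direction
    intro a ha
    by_contra hnot
    obtain ⟨f, u, hfa, hfM⟩ :=
      geometric_hahn_banach_point_closed ((pm_convex hd hM).closure) isClosed_closure hnot
    have hu0 : u < 0 := by
      have := hfM 0 (subset_closure (pm_zero_mem hd hM))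
      rwa [map_zero] at this
    have hfa0 : f a < 0 := lt_trans hfa hu0
    have hfpos : ∀ m ∈ M, 0 ≤ f m := by
      intro m hm
      by_contra hneg
      push_neg at hneg
      set t : ℝ := (u - 1)/(f m) with ht
      have ht0 : 0 ≤ t := le_of_lt (div_pos_of_neg_of_neg (by linarith) hneg)
      have hmem : t • m ∈ M := pm_smul_mem hd hM ht0 hm
      have h2 := hfM _ (subset_closure hmem)
      rw [map_smul, smul_eq_mul, ht, div_mul_cancel₀ _ (ne_of_lt hneg)] at h2
      linarith
    -- continuity bound for f
    have hcont : Continuous ⇑((normSeminorm ℝ ℝ).comp f.toLinearMap) := by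
      have he : ⇑((normSeminorm ℝ ℝ).comp f.toLinearMap) = fun x => ‖f x‖ := rfl
      rw [he]
      exact f.continuous.norm
    obtain ⟨s, C, hCne, hCle⟩ :=
      Seminorm.bound_of_continuous hWS ((normSeminorm ℝ ℝ).comp f.toLinearMap) hcont
    set K : ℝ≥0 := max C 1 with hK
    set Q : Seminorm ℝ A := K • (s.sup p) with hQ
    have hQsub : Submult Q := submult_smul (submult_finset_sup p hsub s) K (le_max_right _ _)
    have hfQ : ∀ x, |f x| ≤ Q x := by
      intro x
      have h1 : ((normSeminorm ℝ ℝ).comp f.toLinearMap) x ≤ (C • s.sup p) x := hCle x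
      have h2 : ((normSeminorm ℝ ℝ).comp f.toLinearMap) x = |f x| := by
        simp [Seminorm.comp_apply, Real.norm_eq_abs]
      have h3 : (C • s.sup p) x = (C:ℝ) * (s.sup p) x := rfl
      have h4 : Q x = (K:ℝ) * (s.sup p) x := rfl
      have h5 : (C:ℝ) ≤ (K:ℝ) := by exact_mod_cast le_max_left C 1
      rw [h2, h3] at h1
      rw [h4]
      nlinarith [apply_nonneg (s.sup p) x]
    have hfQ1 : ∀ x, |f.toLinearMap x| ≤ 1 * Q x := by
      intro x; rw [one_mul]; exact hfQ x
    have hboot := boot Q hQsub hd hM f.toLinearMap hfQ1 hfpos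
    have hf10 : 0 ≤ f 1 := hfpos 1 hM.1
    have hf1 : 0 < f 1 := by
      rcases eq_or_lt_of_le hf10 with h | h
      · exfalso
        have hb := hboot a
        have he : f.toLinearMap a = f a := rfl
        have he1 : f.toLinearMap (1:A) = f 1 := rfl
        rw [he, he1, ← h, zero_mul] at hb
        have h0 : f a = 0 := abs_eq_zero.mp (le_antisymm hb (abs_nonneg _))
        linarith
      · exact h
    -- the normalized state
    set φ₀ : A → ℝ := fun x => (f 1)⁻¹ * f x with hφ₀
    have hφ₀S : φ₀ ∈ States Q M := by
      refine ⟨⟨?_, ?_⟩, ?_, ?_, ?_⟩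
      · intro x y; simp only [hφ₀, map_add]; ring
      · intro r x; simp only [hφ₀, map_smul, smul_eq_mul]; ring
      · intro m hm
        exact mul_nonneg (inv_nonneg.mpr hf10) (hfpos m hm)
      · intro x
        simp only [hφ₀]
        rw [abs_mul, abs_of_pos (inv_pos.mpr hf1)]
        have hb := hboot x
        have he : f.toLinearMap x = f x := rfl
        have he1 : f.toLinearMap (1:A) = f 1 := rfl
        rw [he, he1] at hb
        calc (f 1)⁻¹ * |f x| ≤ (f 1)⁻¹ * (f 1 * Q x) :=
              mul_le_mul_of_nonneg_left hb (inv_nonneg.mpr hf10)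
          _ = Q x := by field_simp
      · simp only [hφ₀]
        field_simp
    have hφ₀a : φ₀ a < 0 := mul_neg_of_pos_of_neg (inv_pos.mpr hf1) hfa0
    -- Krein–Milman in the product space
    have hKM := closure_convexHull_extremePoints (states_isCompact Q M) (states_convex Q M)
    have hexneg : ∃ φ ∈ (States Q M).extremePoints ℝ, φ a < 0 := by
      by_contra hcon
      push_neg at hcon
      have hhalf : Convex ℝ {ψ : A → ℝ | 0 ≤ ψ a} := by
        intro ψ1 h1 ψ2 h2 t1 t2 ht1 ht2 hsum
        simp only [Set.mem_setOf_eq, Pi.add_apply, Pi.smul_apply, smul_eq_mul] at *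
        nlinarith
      have hsubset : States Q M ⊆ {ψ : A → ℝ | 0 ≤ ψ a} := by
        rw [← hKM]
        apply closure_minimal
        · apply convexHull_min
          · intro ψ hψ
            exact hcon ψ hψ
          · exact hhalf
        · exact isClosed_le continuous_const (continuous_apply a)
      have := hsubset hφ₀S
      simp only [Set.mem_setOf_eq] at this
      linarith
    obtain ⟨φ, hφext, hφa⟩ := hexneg
    have hmul := extreme_mul Q hQsub hd hM hφext
    obtain ⟨hlin, hpos, hbd, hone⟩ := hφext.1
    set Lφ : A →ₗ[ℝ] ℝ := IsLinearMap.mk' φ hlin with hLφ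
    set β : A →ₐ[ℝ] ℝ := AlgHom.ofLinearMap Lφ hone (fun x y => hmul x y) with hβ
    have hβφ : ∀ x, β x = φ x := fun _ => rfl
    have hβcont : Continuous ⇑β := by
      have h1 : Continuous ⇑Lφ := by
        apply Seminorm.cont_withSeminorms_normedSpace ℝ hWS Lφ
        refine ⟨s, K, ?_⟩
        intro x
        exact hbd x
      exact h1
    have hfinal := ha β (fun m hm => hpos m hm) hβcont
    rw [hβφ] at hfinal
    linarith


/-- **Closure theorem for locally multiplicatively convex `ℝ`-algebras.** Let `τ` be the
locally multiplicatively convex topology on `A` generated by a family of submultiplicative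
seminorms and let `M` be a `2d`-power module of `A`. Then the `τ`-closure of `M` equals
`Pos(X_M ∩ sp(τ))`, the set of elements whose Gelfand transform is non-negative on all
`τ`-continuous characters which are non-negative on `M`. -/
theorem closure_powerModule_eq_pos_lmc (A : Type*) [CommRing A] [Algebra ℝ A]
    {ι : Type*} [Nonempty ι] (p : ι → Seminorm ℝ A)
    (hsub : ∀ i : ι, ∀ a b : A, p i (a * b) ≤ p i a * p i b)
    (d : ℕ) (hd : 0 < d) (M : Set A) (hM : IsPowerModule d M) :
    @closure A (seminormFamilyTopology p) M =
      {a : A | ∀ α : A →ₐ[ℝ] ℝ,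
        (∀ m ∈ M, 0 ≤ α m) →
          @Continuous A ℝ (seminormFamilyTopology p) inferInstance ⇑α → 0 ≤ α a} :=
  closure_powerModule_eq_pos_lmc' A p hsub d hd M hM
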